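/- arXiv:2202.07960 — 5 statements merged into one kernel-verified Lean document; each statement's English description precedes it below -/
import Mathlib

section
/- Let μ > 0 and let A be a real d×d matrix such that A + Aᵀ − 2μ·I is positive semidefinite, and let b, θ* ∈ ℝ^d satisfy A·θ* = b and ‖θ*‖ ≤ M for some M ≥ 0. On a probability space, let (F_k)_{k≥0} be a filtration, (α_k)_{k≥0} positive reals, (ε_k)_{k≥0} and (c_k)_{k≥0} nonnegative reals, and let (θ_k)_{k≥0} and (g_k)_{k≥0} be sequences of square-integrable ℝ^d-valued random vectors such that: θ_k is F_k-measurable; ‖θ₀‖ ≤ M almost surely; θ_{k+1} = Π_M(θ_k − α_k·g_k) almost surely; and almost surely for every k, ‖E[g_k | F_k] − (A·θ_k − b)‖ ≤ (1 + ‖θ_k‖)·ε_k and E[‖g_k‖² | F_k] ≤ c_k·(1 + ‖θ_k‖²). Then for every k ≥ 0: E[‖θ_k − θ*‖²] ≤ 4M²·exp(−μ·Σ_{i=0}^{k−1} α_i) + 2·(1 + M²)·Σ_{i=0}^{k−1} α_i·(c_i·α_i + μ⁻¹·ε_i²)·exp(−μ·Σ_{j=i+1}^{k−1} α_j). -/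
open MeasureTheory ProbabilityTheory Matrix
open scoped RealInnerProductSpace

noncomputable section

/-- Metric projection onto the closed Euclidean ball of radius `M` centered at `0`. -/
def projBall {d : ℕ} (M : ℝ) (x : EuclideanSpace ℝ (Fin d)) : EuclideanSpace ℝ (Fin d) :=
  if ‖x‖ ≤ M then x else (M / ‖x‖) • x

/-- Matrix–vector multiplication, viewed as a map on Euclidean space. -/
def mulVecE {d : ℕ} (A : Matrix (Fin d) (Fin d) ℝ) (x : EuclideanSpace ℝ (Fin d)) :
    EuclideanSpace ℝ (Fin d) :=
  WithLp.toLp 2 (A.mulVec x)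

lemma projBall_norm_le {d : ℕ} {M : ℝ} (hM : 0 ≤ M) (x : EuclideanSpace ℝ (Fin d)) :
    ‖projBall M x‖ ≤ M := by
  unfold projBall
  split_ifs with h
  · exact h
  · push_neg at h
    have hx : 0 < ‖x‖ := lt_of_le_of_lt hM h
    rw [norm_smul, Real.norm_eq_abs, abs_div, abs_of_nonneg hM, abs_of_nonneg hx.le,
      div_mul_cancel₀ _ hx.ne']

lemma projBall_nonexpansive {d : ℕ} {M : ℝ} (hM : 0 ≤ M) (x y : EuclideanSpace ℝ (Fin d))
    (hy : ‖y‖ ≤ M) : ‖projBall M x - y‖ ≤ ‖x - y‖ := by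
  unfold projBall
  split_ifs with h
  · exact le_refl _
  · push_neg at h
    have hx : 0 < ‖x‖ := lt_of_le_of_lt hM h
    set t := M / ‖x‖ with htdef
    have ht0 : 0 ≤ t := div_nonneg hM hx.le
    have ht1 : t ≤ 1 := by rw [htdef, div_le_one hx]; exact h.le
    have htx : t * ‖x‖ = M := div_mul_cancel₀ _ hx.ne'
    have hip : ⟪x, y⟫ ≤ ‖x‖ * ‖y‖ := real_inner_le_norm x y
    have h1 : ⟪x, y⟫ ≤ t * ‖x‖ ^ 2 := by nlinarith [norm_nonneg x, norm_nonneg y]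
    have hsq : ‖t • x - y‖ ^ 2 ≤ ‖x - y‖ ^ 2 := by
      rw [norm_sub_sq_real, norm_sub_sq_real, real_inner_smul_left, norm_smul,
        Real.norm_eq_abs, abs_of_nonneg ht0]
      nlinarith [norm_nonneg x, mul_nonneg (sub_nonneg.2 ht1)
        (sub_nonneg.2 (show 2 * ⟪x, y⟫ ≤ (1 + t) * ‖x‖ ^ 2 by nlinarith [norm_nonneg x]))]
    have h2 := Real.sqrt_le_sqrt hsq
    rwa [Real.sqrt_sq (norm_nonneg _), Real.sqrt_sq (norm_nonneg _)] at h2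

lemma inner_mulVecE_ge {d : ℕ} {μ : ℝ} {A : Matrix (Fin d) (Fin d) ℝ}
    (hA : (A + Aᵀ - (2 * μ) • (1 : Matrix (Fin d) (Fin d) ℝ)).PosSemidef)
    (x : EuclideanSpace ℝ (Fin d)) : μ * ‖x‖ ^ 2 ≤ ⟪x, mulVecE A x⟫ := by
  have h := hA.dotProduct_mulVec_nonneg x.ofLp
  have hdot : ⟪x, mulVecE A x⟫ = x ⬝ᵥ A.mulVec x := by
    simp [mulVecE, PiLp.inner_apply, dotProduct, RCLike.inner_apply, mul_comm]
  have hnorm : ‖x‖ ^ 2 = x ⬝ᵥ x := by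
    rw [← real_inner_self_eq_norm_sq]
    simp only [PiLp.inner_apply, dotProduct, RCLike.inner_apply, starRingEnd_apply, star_trivial, mul_comm]
  have htr : x ⬝ᵥ Aᵀ.mulVec x = x ⬝ᵥ A.mulVec x := by
    rw [Matrix.dotProduct_mulVec, Matrix.vecMul_transpose, dotProduct_comm]
  simp only [star_trivial, Matrix.sub_mulVec, Matrix.add_mulVec, Matrix.smul_mulVec,
    Matrix.one_mulVec, dotProduct_sub, dotProduct_add, dotProduct_smul, smul_eq_mul] at h
  rw [hdot, hnorm]
  linarith [htr ▸ h]

lemma abs_coord_le {d : ℕ} (x : EuclideanSpace ℝ (Fin d)) (i : Fin d) : |x i| ≤ ‖x‖ := by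
  rw [EuclideanSpace.norm_eq, ← Real.sqrt_sq_eq_abs]
  refine Real.sqrt_le_sqrt ?_
  have := Finset.single_le_sum (f := fun j => ‖x j‖ ^ 2)
    (fun j _ => sq_nonneg _) (Finset.mem_univ i)
  simpa [Real.norm_eq_abs, sq_abs] using this

lemma condexp_proj {Ω : Type*} {m : MeasurableSpace Ω} [m0 : MeasurableSpace Ω]
    (P : Measure Ω) [IsProbabilityMeasure P]
    {d : ℕ} (hm : m ≤ m0) (f : Ω → EuclideanSpace ℝ (Fin d))
    (hf : Integrable f P) (i : Fin d) :
    (fun ω => (P[f|m]) ω i) =ᵐ[P] P[fun ω => f ω i|m] := by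
  refine ae_eq_condExp_of_forall_setIntegral_eq hm
    ((EuclideanSpace.proj (𝕜 := ℝ) i).integrable_comp hf) ?_ ?_ ?_
  · intro s _ _
    exact ((EuclideanSpace.proj (𝕜 := ℝ) i).integrable_comp integrable_condExp).integrableOn
  · intro s hs hμs
    have h1 : ∫ x in s, (P[f|m]) x i ∂P
        = (EuclideanSpace.proj (𝕜 := ℝ) i) (∫ x in s, (P[f|m]) x ∂P) :=
      ((EuclideanSpace.proj (𝕜 := ℝ) i).integral_comp_comm integrable_condExp.integrableOn)
    have h2 : ∫ x in s, f x i ∂P = (EuclideanSpace.proj (𝕜 := ℝ) i) (∫ x in s, f x ∂P) :=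
      ((EuclideanSpace.proj (𝕜 := ℝ) i).integral_comp_comm hf.integrableOn)
    rw [h1, h2, setIntegral_condExp hm hf hs]
  · exact ((EuclideanSpace.proj (𝕜 := ℝ) i).continuous.comp_stronglyMeasurable
      stronglyMeasurable_condExp).aestronglyMeasurable

lemma integral_inner_condexp {Ω : Type*} {m : MeasurableSpace Ω} [m0 : MeasurableSpace Ω]
    (P : Measure Ω) [IsProbabilityMeasure P] {d : ℕ} (hm : m ≤ m0)
    (e gg : Ω → EuclideanSpace ℝ (Fin d)) (C : ℝ)
    (he : StronglyMeasurable[m] e) (heb : ∀ᵐ ω ∂P, ‖e ω‖ ≤ C)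
    (hg : Integrable gg P) :
    ∫ ω, ⟪e ω, gg ω⟫ ∂P = ∫ ω, ⟪e ω, (P[gg|m]) ω⟫ ∂P := by
  have hei : ∀ i : Fin d, StronglyMeasurable[m] fun ω => e ω i := fun i =>
    (EuclideanSpace.proj (𝕜 := ℝ) i).continuous.comp_stronglyMeasurable he
  have hebi : ∀ i : Fin d, ∀ᵐ ω ∂P, ‖e ω i‖ ≤ C := fun i => by
    filter_upwards [heb] with ω hω using le_trans (by simpa using abs_coord_le (e ω) i) hω
  have hgi : ∀ i : Fin d, Integrable (fun ω => gg ω i) P := fun i =>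
    (EuclideanSpace.proj (𝕜 := ℝ) i).integrable_comp hg
  have hmul : ∀ i : Fin d, Integrable (fun ω => e ω i * gg ω i) P := fun i =>
    (hgi i).bdd_mul ((hei i).mono hm).aestronglyMeasurable (hebi i)
  have hmulc : ∀ i : Fin d, Integrable (fun ω => e ω i * (P[gg|m]) ω i) P := fun i =>
    ((EuclideanSpace.proj (𝕜 := ℝ) i).integrable_comp integrable_condExp).bdd_mul
      ((hei i).mono hm).aestronglyMeasurable (hebi i)
  have expand : ∀ (h : Ω → EuclideanSpace ℝ (Fin d)),
      (fun ω => ⟪e ω, h ω⟫) = fun ω => ∑ i : Fin d, e ω i * h ω i := by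
    intro h; funext ω; simp [PiLp.inner_apply, RCLike.inner_apply, mul_comm]
  rw [expand, expand, integral_finset_sum _ (fun i _ => hmul i),
    integral_finset_sum _ (fun i _ => hmulc i)]
  refine Finset.sum_congr rfl fun i _ => ?_
  have step1 : ∫ ω, e ω i * gg ω i ∂P = ∫ ω, (P[fun ω' => e ω' i * gg ω' i|m]) ω ∂P :=
    (integral_condExp hm).symm
  have step2 : P[fun ω' => e ω' i * gg ω' i|m]
      =ᵐ[P] fun ω => e ω i * (P[fun ω' => gg ω' i|m]) ω := by
    exact
      condExp_stronglyMeasurable_mul_of_bound hm (hei i) (hgi i) C (hebi i)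
  rw [step1, integral_congr_ae step2]
  refine integral_congr_ae ?_
  filter_upwards [condexp_proj P hm gg hg i] with ω hω
  rw [← hω]

lemma combine_aux {μ M u w e ia ip : ℝ} (hμ : 0 < μ) (hwM : w ≤ M) (hw : 0 ≤ w)
    (hu : 0 ≤ u) (he : 0 ≤ e) (h1 : μ * u ^ 2 ≤ ia) (h2 : -(u * ((1 + w) * e)) ≤ ip) :
    μ * u ^ 2 - 2 * μ⁻¹ * (1 + M ^ 2) * e ^ 2 ≤ 2 * (ia + ip) := by
  have ht : 0 ≤ μ⁻¹ := inv_nonneg.2 hμ.le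
  have key : μ⁻¹ * (μ * u - (1 + w) * e) ^ 2
      = μ * u ^ 2 - 2 * (u * ((1 + w) * e)) + μ⁻¹ * ((1 + w) * e) ^ 2 := by
    field_simp; ring
  have hyoung : 2 * (u * ((1 + w) * e)) ≤ μ * u ^ 2 + μ⁻¹ * ((1 + w) * e) ^ 2 := by
    linarith [mul_nonneg ht (sq_nonneg (μ * u - (1 + w) * e)), key.symm.le, key.le]
  have hsq : ((1 + w) * e) ^ 2 ≤ 2 * (1 + M ^ 2) * e ^ 2 := by
    have hw2 : w ^ 2 ≤ M ^ 2 := by nlinarith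
    nlinarith [mul_nonneg (sq_nonneg (1 - w)) (sq_nonneg e),
      mul_le_mul_of_nonneg_right hw2 (sq_nonneg e)]
  have h5 := mul_le_mul_of_nonneg_left hsq ht
  have h4 : μ⁻¹ * (2 * (1 + M ^ 2) * e ^ 2) = 2 * μ⁻¹ * (1 + M ^ 2) * e ^ 2 := by ring
  linarith

set_option maxHeartbeats 1600000 in

set_option maxHeartbeats 1600000

/-- Abstract stochastic-approximation convergence theorem for the projected iteration
`θ_{k+1} = Π_M(θ_k − α_k g_k)` with biased estimates `g_k` of `A θ_k − b`, where the
symmetric part of `A` is at least `μ I`: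
`E[‖θ_k − θ*‖²] ≤ 4M² e^{−μ Σ_{i<k} α_i} + 2(1+M²) Σ_{i<k} α_i (c_i α_i + μ⁻¹ ε_i²)
e^{−μ Σ_{i<j<k} α_j}`. -/
theorem projected_stochastic_approximation
    {Ω : Type*} [m0 : MeasurableSpace Ω] (P : Measure Ω) [IsProbabilityMeasure P]
    (d : ℕ) (μ M : ℝ) (hμ : 0 < μ) (hM : 0 ≤ M)
    (A : Matrix (Fin d) (Fin d) ℝ)
    (hA : (A + Aᵀ - (2 * μ) • (1 : Matrix (Fin d) (Fin d) ℝ)).PosSemidef)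
    (b θstar : EuclideanSpace ℝ (Fin d))
    (hθstar : mulVecE A θstar = b) (hθstarM : ‖θstar‖ ≤ M)
    (F : ℕ → MeasurableSpace Ω) (hF : ∀ k, F k ≤ m0) (hFmono : Monotone F)
    (α : ℕ → ℝ) (hα : ∀ k, 0 < α k)
    (ε c : ℕ → ℝ) (hε : ∀ k, 0 ≤ ε k) (hc : ∀ k, 0 ≤ c k)
    (θ g : ℕ → Ω → EuclideanSpace ℝ (Fin d))
    (hθmeas : ∀ k, StronglyMeasurable[F k] (θ k))
    (hθL2 : ∀ k, MemLp (θ k) 2 P) (hgL2 : ∀ k, MemLp (g k) 2 P)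
    (hθ0 : ∀ᵐ ω ∂P, ‖θ 0 ω‖ ≤ M)
    (hrec : ∀ k, ∀ᵐ ω ∂P, θ (k + 1) ω = projBall M (θ k ω - α k • g k ω))
    (hbias : ∀ k, ∀ᵐ ω ∂P,
      ‖(P[g k | F k]) ω - (mulVecE A (θ k ω) - b)‖ ≤ (1 + ‖θ k ω‖) * ε k)
    (hmom : ∀ k, ∀ᵐ ω ∂P,
      (P[fun ω' => ‖g k ω'‖ ^ 2 | F k]) ω ≤ c k * (1 + ‖θ k ω‖ ^ 2)) :
    ∀ k : ℕ,
      (∫ ω, ‖θ k ω - θstar‖ ^ 2 ∂P) ≤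
        4 * M ^ 2 * Real.exp (-μ * ∑ i ∈ Finset.range k, α i) +
        2 * (1 + M ^ 2) * ∑ i ∈ Finset.range k,
          α i * (c i * α i + μ⁻¹ * ε i ^ 2) *
            Real.exp (-μ * ∑ j ∈ Finset.Ico (i + 1) k, α j) := by
  -- a.s. bound on all iterates
  have hbM : ∀ k, ∀ᵐ ω ∂P, ‖θ k ω‖ ≤ M := by
    intro k
    induction k with
    | zero => exact hθ0
    | succ n _ =>
      filter_upwards [hrec n] with ω hω
      rw [hω]; exact projBall_norm_le hM _
  have heb : ∀ k, ∀ᵐ ω ∂P, ‖θ k ω - θstar‖ ≤ 2 * M := fun k => by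
    filter_upwards [hbM k] with ω hω
    calc ‖θ k ω - θstar‖ ≤ ‖θ k ω‖ + ‖θstar‖ := norm_sub_le _ _
      _ ≤ 2 * M := by linarith
  -- integrability package
  have hθsub : ∀ k, MemLp (fun ω => θ k ω - θstar) 2 P := fun k =>
    (hθL2 k).sub (memLp_const _)
  have hInt_e2 : ∀ k, Integrable (fun ω => ‖θ k ω - θstar‖ ^ 2) P := fun k =>
    (hθsub k).norm.integrable_sq
  have hg_int : ∀ k, Integrable (g k) P := fun k => (hgL2 k).integrable one_le_two
  have hg2 : ∀ k, Integrable (fun ω => ‖g k ω‖ ^ 2) P := fun k => (hgL2 k).norm.integrable_sq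
  have hθ2 : ∀ k, Integrable (fun ω => ‖θ k ω‖ ^ 2) P := fun k => (hθL2 k).norm.integrable_sq
  have he_meas : ∀ k, StronglyMeasurable[F k] (fun ω => θ k ω - θstar) := fun k =>
    (hθmeas k).sub stronglyMeasurable_const
  have hip_g : ∀ k, Integrable (fun ω => ⟪θ k ω - θstar, g k ω⟫) P := by
    intro k
    have hsm : AEStronglyMeasurable (fun ω => (⟪θ k ω - θstar, g k ω⟫ : ℝ)) P :=
      AEStronglyMeasurable.inner ((hθsub k).aestronglyMeasurable)
        ((hg_int k).aestronglyMeasurable)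
    refine Integrable.mono' ((hg_int k).norm.const_mul (2 * M)) hsm ?_
    filter_upwards [heb k] with ω hω
    calc ‖⟪θ k ω - θstar, g k ω⟫‖ ≤ ‖θ k ω - θstar‖ * ‖g k ω‖ := by
          simpa [Real.norm_eq_abs] using abs_real_inner_le_norm (θ k ω - θstar) (g k ω)
      _ ≤ 2 * M * ‖g k ω‖ := by
          exact mul_le_mul_of_nonneg_right hω (norm_nonneg _)
  have hip_h : ∀ k, Integrable (fun ω => ⟪θ k ω - θstar, (P[g k|F k]) ω⟫) P := by
    intro k
    have hc1 : Integrable (P[g k|F k]) P := integrable_condExp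
    have hsm : AEStronglyMeasurable (fun ω => (⟪θ k ω - θstar, (P[g k|F k]) ω⟫ : ℝ)) P :=
      AEStronglyMeasurable.inner ((hθsub k).aestronglyMeasurable) hc1.aestronglyMeasurable
    refine Integrable.mono' (hc1.norm.const_mul (2 * M)) hsm ?_
    filter_upwards [heb k] with ω hω
    calc ‖⟪θ k ω - θstar, (P[g k|F k]) ω⟫‖ ≤ ‖θ k ω - θstar‖ * ‖(P[g k|F k]) ω‖ := by
          simpa [Real.norm_eq_abs] using abs_real_inner_le_norm (θ k ω - θstar) ((P[g k|F k]) ω)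
      _ ≤ 2 * M * ‖(P[g k|F k]) ω‖ := mul_le_mul_of_nonneg_right hω (norm_nonneg _)
  -- one-step inequality
  have hstep : ∀ k, (∫ ω, ‖θ (k + 1) ω - θstar‖ ^ 2 ∂P) ≤
      Real.exp (-μ * α k) * (∫ ω, ‖θ k ω - θstar‖ ^ 2 ∂P) +
        2 * (1 + M ^ 2) * (α k * (c k * α k + μ⁻¹ * ε k ^ 2)) := by
    intro k
    have hm := hF k
    have hdiff : MemLp (fun ω => θ k ω - α k • g k ω - θstar) 2 P :=
      ((hθL2 k).sub ((hgL2 k).const_smul (α k))).sub (memLp_const _)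
    have hdiff2 : Integrable (fun ω => ‖θ k ω - α k • g k ω - θstar‖ ^ 2) P :=
      hdiff.norm.integrable_sq
    have hnext2 : Integrable (fun ω => ‖θ (k + 1) ω - θstar‖ ^ 2) P := hInt_e2 (k + 1)
    -- projection step
    have hI1 : (∫ ω, ‖θ (k + 1) ω - θstar‖ ^ 2 ∂P) ≤
        ∫ ω, ‖θ k ω - α k • g k ω - θstar‖ ^ 2 ∂P := by
      refine integral_mono_ae hnext2 hdiff2 ?_
      filter_upwards [hrec k] with ω hω
      rw [hω]
      exact pow_le_pow_left₀ (norm_nonneg _)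
        (projBall_nonexpansive hM (θ k ω - α k • g k ω) θstar hθstarM) 2
    -- expansion of the square
    have hexp : (fun ω => ‖θ k ω - α k • g k ω - θstar‖ ^ 2) =
        fun ω => ‖θ k ω - θstar‖ ^ 2 - 2 * α k * ⟪θ k ω - θstar, g k ω⟫
          + α k ^ 2 * ‖g k ω‖ ^ 2 := by
      funext ω
      rw [sub_right_comm, norm_sub_sq_real, real_inner_smul_right, norm_smul,
        Real.norm_eq_abs, mul_pow, sq_abs]
      ring
    have hI2 : (∫ ω, ‖θ k ω - α k • g k ω - θstar‖ ^ 2 ∂P) =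
        (∫ ω, ‖θ k ω - θstar‖ ^ 2 ∂P)
          - 2 * α k * (∫ ω, ⟪θ k ω - θstar, g k ω⟫ ∂P)
          + α k ^ 2 * (∫ ω, ‖g k ω‖ ^ 2 ∂P) := by
      have ha : Integrable (fun ω =>
          ‖θ k ω - θstar‖ ^ 2 - 2 * α k * ⟪θ k ω - θstar, g k ω⟫) P :=
        (hInt_e2 k).sub ((hip_g k).const_mul (2 * α k))
      have hb : Integrable (fun ω => α k ^ 2 * ‖g k ω‖ ^ 2) P :=
        (hg2 k).const_mul (α k ^ 2)
      have hc' : Integrable (fun ω => 2 * α k * ⟪θ k ω - θstar, g k ω⟫) P :=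
        (hip_g k).const_mul (2 * α k)
      rw [hexp, integral_add ha hb, integral_sub (hInt_e2 k) hc',
        integral_const_mul, integral_const_mul]
    -- pull-out
    have hI3 : (∫ ω, ⟪θ k ω - θstar, g k ω⟫ ∂P) =
        ∫ ω, ⟪θ k ω - θstar, (P[g k|F k]) ω⟫ ∂P :=
      integral_inner_condexp P hm (fun ω => θ k ω - θstar) (g k) (2 * M)
        (he_meas k) (heb k) (hg_int k)
    -- lower bound on inner product with conditional mean
    have hI4 : μ * (∫ ω, ‖θ k ω - θstar‖ ^ 2 ∂P) - 2 * μ⁻¹ * (1 + M ^ 2) * ε k ^ 2 ≤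
        2 * ∫ ω, ⟪θ k ω - θstar, (P[g k|F k]) ω⟫ ∂P := by
      have hptwise : ∀ᵐ ω ∂P,
          μ * ‖θ k ω - θstar‖ ^ 2 - 2 * μ⁻¹ * (1 + M ^ 2) * ε k ^ 2 ≤
            2 * ⟪θ k ω - θstar, (P[g k|F k]) ω⟫ := by
        filter_upwards [hbias k, hbM k] with ω hb hθM
        set e := θ k ω - θstar with he
        set h := (P[g k|F k]) ω with hh
        have hAe : mulVecE A (θ k ω) - b = mulVecE A e := by
          rw [← hθstar]
          rw [he]; simp [mulVecE, Matrix.mulVec_sub]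
        have h1 : μ * ‖e‖ ^ 2 ≤ ⟪e, mulVecE A e⟫ := inner_mulVecE_ge hA e
        have hbd : ‖h - mulVecE A e‖ ≤ (1 + ‖θ k ω‖) * ε k := by
          rw [← hAe]; exact hb
        have h2 : |⟪e, h - mulVecE A e⟫| ≤ ‖e‖ * ((1 + ‖θ k ω‖) * ε k) := by
          refine le_trans (abs_real_inner_le_norm _ _) ?_
          exact mul_le_mul_of_nonneg_left hbd (norm_nonneg _)
        have hsplit : ⟪e, h⟫ = ⟪e, mulVecE A e⟫ + ⟪e, h - mulVecE A e⟫ := by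
          rw [← inner_add_right]; congr 1; abel
        have h2' : -(‖e‖ * ((1 + ‖θ k ω‖) * ε k)) ≤ ⟪e, h - mulVecE A e⟫ :=
          neg_le_of_abs_le h2
        rw [hsplit]
        exact combine_aux hμ hθM (norm_nonneg _) (norm_nonneg _) (hε k) h1 h2'
      have hlhs : Integrable (fun ω =>
          μ * ‖θ k ω - θstar‖ ^ 2 - 2 * μ⁻¹ * (1 + M ^ 2) * ε k ^ 2) P :=
        ((hInt_e2 k).const_mul μ).sub (integrable_const _)
      have := integral_mono_ae hlhs ((hip_h k).const_mul 2) hptwise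
      rw [integral_sub ((hInt_e2 k).const_mul μ) (integrable_const _), integral_const_mul,
        integral_const, integral_const_mul, probReal_univ, one_smul] at this
      linarith
    -- second-moment bound
    have hI5 : (∫ ω, ‖g k ω‖ ^ 2 ∂P) ≤ c k * (1 + M ^ 2) := by
      have h1 : (∫ ω, ‖g k ω‖ ^ 2 ∂P) =
          ∫ ω, (P[fun ω' => ‖g k ω'‖ ^ 2|F k]) ω ∂P := (integral_condExp hm).symm
      have hrint : Integrable (fun ω => c k * (1 + ‖θ k ω‖ ^ 2)) P :=
        ((integrable_const (1 : ℝ)).add (hθ2 k)).const_mul (c k)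
      have h2 : (∫ ω, (P[fun ω' => ‖g k ω'‖ ^ 2|F k]) ω ∂P) ≤
          ∫ ω, c k * (1 + ‖θ k ω‖ ^ 2) ∂P :=
        integral_mono_ae integrable_condExp hrint (hmom k)
      have h3 : (∫ ω, c k * (1 + ‖θ k ω‖ ^ 2) ∂P) ≤ ∫ _ω, c k * (1 + M ^ 2) ∂P := by
        refine integral_mono_ae hrint (integrable_const _) ?_
        filter_upwards [hbM k] with ω hω
        have : ‖θ k ω‖ ^ 2 ≤ M ^ 2 := pow_le_pow_left₀ (norm_nonneg _) hω 2
        nlinarith [hc k]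
      rw [h1]
      refine le_trans h2 (le_trans h3 ?_)
      rw [integral_const, probReal_univ, one_smul]
    -- combine
    have hX0 : 0 ≤ ∫ ω, ‖θ k ω - θstar‖ ^ 2 ∂P :=
      integral_nonneg fun ω => sq_nonneg _
    have hexpb : 1 - μ * α k ≤ Real.exp (-μ * α k) := by
      have := Real.add_one_le_exp (-(μ * α k)); rw [neg_mul]; linarith
    have hG0 : 0 ≤ α k ^ 2 * (c k * (1 + M ^ 2)) - α k ^ 2 * (∫ ω, ‖g k ω‖ ^ 2 ∂P) := by
      have := mul_le_mul_of_nonneg_left hI5 (sq_nonneg (α k)); linarith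
    have hfin : (1 - μ * α k) * (∫ ω, ‖θ k ω - θstar‖ ^ 2 ∂P) ≤
        Real.exp (-μ * α k) * (∫ ω, ‖θ k ω - θstar‖ ^ 2 ∂P) :=
      mul_le_mul_of_nonneg_right hexpb hX0
    have hαk := hα k
    calc (∫ ω, ‖θ (k + 1) ω - θstar‖ ^ 2 ∂P)
        ≤ (∫ ω, ‖θ k ω - θstar‖ ^ 2 ∂P)
            - 2 * α k * (∫ ω, ⟪θ k ω - θstar, g k ω⟫ ∂P)
            + α k ^ 2 * (∫ ω, ‖g k ω‖ ^ 2 ∂P) := by rw [← hI2]; exact hI1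
      _ ≤ (1 - μ * α k) * (∫ ω, ‖θ k ω - θstar‖ ^ 2 ∂P)
            + 2 * (1 + M ^ 2) * (α k * (c k * α k + μ⁻¹ * ε k ^ 2)) := by
          rw [hI3]
          have hI4' := mul_le_mul_of_nonneg_left hI4 hαk.le
          have hI5' := mul_le_mul_of_nonneg_left hI5 (sq_nonneg (α k))
          have hpos : 0 ≤ (1 + M ^ 2) * (c k * α k ^ 2) :=
            mul_nonneg (by positivity) (mul_nonneg (hc k) (sq_nonneg _))
          linarith
      _ ≤ Real.exp (-μ * α k) * (∫ ω, ‖θ k ω - θstar‖ ^ 2 ∂P)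
            + 2 * (1 + M ^ 2) * (α k * (c k * α k + μ⁻¹ * ε k ^ 2)) := by linarith
  -- induction
  intro k
  induction k with
  | zero =>
    simp only [Finset.range_zero, Finset.sum_empty, mul_zero, neg_zero, Real.exp_zero,
      mul_one, add_zero]
    have : (∫ ω, ‖θ 0 ω - θstar‖ ^ 2 ∂P) ≤ ∫ _ω, 4 * M ^ 2 ∂P := by
      refine integral_mono_ae (hInt_e2 0) (integrable_const _) ?_
      filter_upwards [heb 0] with ω hω
      nlinarith [norm_nonneg (θ 0 ω - θstar)]
    simpa [measure_univ] using this
  | succ n ih =>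
    have h1 := hstep n
    have h2 : Real.exp (-μ * α n) * (∫ ω, ‖θ n ω - θstar‖ ^ 2 ∂P) ≤
        Real.exp (-μ * α n) *
          (4 * M ^ 2 * Real.exp (-μ * ∑ i ∈ Finset.range n, α i) +
            2 * (1 + M ^ 2) * ∑ i ∈ Finset.range n,
              α i * (c i * α i + μ⁻¹ * ε i ^ 2) *
                Real.exp (-μ * ∑ j ∈ Finset.Ico (i + 1) n, α j)) :=
      mul_le_mul_of_nonneg_left ih (Real.exp_pos _).le
    have halg : Real.exp (-μ * α n) *
          (4 * M ^ 2 * Real.exp (-μ * ∑ i ∈ Finset.range n, α i) +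
            2 * (1 + M ^ 2) * ∑ i ∈ Finset.range n,
              α i * (c i * α i + μ⁻¹ * ε i ^ 2) *
                Real.exp (-μ * ∑ j ∈ Finset.Ico (i + 1) n, α j)) +
          2 * (1 + M ^ 2) * (α n * (c n * α n + μ⁻¹ * ε n ^ 2)) =
        4 * M ^ 2 * Real.exp (-μ * ∑ i ∈ Finset.range (n + 1), α i) +
          2 * (1 + M ^ 2) * ∑ i ∈ Finset.range (n + 1),
            α i * (c i * α i + μ⁻¹ * ε i ^ 2) *
              Real.exp (-μ * ∑ j ∈ Finset.Ico (i + 1) (n + 1), α j) := by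
      have hsum1 : Real.exp (-μ * ∑ i ∈ Finset.range (n + 1), α i) =
          Real.exp (-μ * ∑ i ∈ Finset.range n, α i) * Real.exp (-μ * α n) := by
        rw [Finset.sum_range_succ, mul_add, Real.exp_add]
      have hsum2 : (∑ i ∈ Finset.range (n + 1),
            α i * (c i * α i + μ⁻¹ * ε i ^ 2) *
              Real.exp (-μ * ∑ j ∈ Finset.Ico (i + 1) (n + 1), α j)) =
          (∑ i ∈ Finset.range n,
            α i * (c i * α i + μ⁻¹ * ε i ^ 2) *
              Real.exp (-μ * ∑ j ∈ Finset.Ico (i + 1) n, α j)) * Real.exp (-μ * α n) +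
            α n * (c n * α n + μ⁻¹ * ε n ^ 2) := by
        rw [Finset.sum_range_succ]
        have hlast : (∑ j ∈ Finset.Ico (n + 1) (n + 1), α j) = 0 := by simp
        rw [hlast, mul_zero, Real.exp_zero, mul_one, Finset.sum_mul]
        congr 1
        refine Finset.sum_congr rfl fun i hi => ?_
        have hin : i + 1 ≤ n := Nat.succ_le_of_lt (Finset.mem_range.1 hi)
        rw [Finset.sum_Ico_succ_top hin, mul_add (-μ), Real.exp_add]
        ring
      rw [hsum1, hsum2]
      ring
    linarith
end
end

section
/- Let H be a real d×d matrix with symmetric part S = (H + Hᵀ)/2 and antisymmetric part A = (H − Hᵀ)/2. Assume S is positive semidefinite and that there exists c ≥ 0 with AᵀA ⪯ c²·S² and SA − AS ⪯ 2c·S² in the Loewner order. Then for every α > 0 with α·(1 + c)²·tr(S) ≤ 1, one has (I − α·Hᵀ)·(I − α·H) ⪯ I − α·S. -/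
open Matrix

private lemma psd_smul {n : ℕ} {M : Matrix (Fin n) (Fin n) ℝ} (hM : M.PosSemidef)
    {r : ℝ} (hr : 0 ≤ r) : (r • M).PosSemidef := by
  refine ⟨?_, fun x => ?_⟩
  · unfold Matrix.IsHermitian
    rw [conjTranspose_smul, hM.1.eq]
    simp
  · have h := mul_nonneg hr (hM.2 x)
    simp only [Matrix.smul_apply, smul_eq_mul, star_trivial] at h ⊢
    rw [Finsupp.mul_sum] at h
    refine le_of_le_of_eq h (Finsupp.sum_congr fun i _ => ?_)
    rw [Finsupp.mul_sum]
    exact Finsupp.sum_congr fun j _ => by ring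

/-- trace of a psd matrix dominates each eigenvalue. -/
private lemma trace_smul_sub_sq_psd {n : ℕ} {S : Matrix (Fin n) (Fin n) ℝ}
    (hS : S.PosSemidef) : (S.trace • S - S * S).PosSemidef := by
  have hH : S.IsHermitian := hS.1
  have main : ∀ (U : Matrix (Fin n) (Fin n) ℝ) (ev : Fin n → ℝ),
      star U * U = 1 → (∀ i, 0 ≤ ev i) → S = U * diagonal ev * star U →
      (S.trace • S - S * S).PosSemidef := by
    intro U ev hUU hev hSU
    have htr : S.trace = ∑ i, ev i := by
      rw [hSU, trace_mul_cycle, hUU, one_mul, trace_diagonal]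
    obtain ⟨t, ht⟩ : ∃ t, S.trace = t := ⟨_, rfl⟩
    rw [ht] at htr
    rw [ht]
    have key : t • S - S * S
        = U * diagonal (fun i => t * ev i - ev i ^ 2) * star U := by
      have h1 : U * diagonal ev * star U * (U * diagonal ev * star U)
          = U * (diagonal ev * diagonal ev) * star U := by
        rw [show U * diagonal ev * star U * (U * diagonal ev * star U)
          = U * diagonal ev * (star U * U) * diagonal ev * star U by noncomm_ring, hUU]
        noncomm_ring
      have h2 : t • (U * diagonal ev * star U)
          = U * (t • diagonal ev) * star U := by
        rw [mul_smul_comm, smul_mul_assoc]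
      conv_lhs => rw [hSU, h1, h2]
      rw [← Matrix.sub_mul, ← Matrix.mul_sub, diagonal_mul_diagonal, ← diagonal_smul,
        ← diagonal_sub]
      congr 2
      funext i j
      by_cases h : i = j <;>
        simp [Matrix.diagonal_apply, h, sq, Matrix.sub_apply, Matrix.smul_apply]
    rw [key, star_eq_conjTranspose]
    refine PosSemidef.mul_mul_conjTranspose_same (posSemidef_diagonal_iff.mpr fun i => ?_) U
    have h1 : ev i ≤ t := htr ▸ Finset.single_le_sum (fun j _ => hev j) (Finset.mem_univ i)
    nlinarith [hev i]
  refine main (hH.eigenvectorUnitary : Matrix (Fin n) (Fin n) ℝ)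
    hH.eigenvalues ?_ hS.eigenvalues_nonneg ?_
  · exact (Matrix.mem_unitaryGroup_iff').mp hH.eigenvectorUnitary.2
  · have := hH.spectral_theorem
    simpa using this

/-- Contraction estimate for the TD(0) iteration matrix: if `S` and `A` are the symmetric
and antisymmetric parts of `H`, `S` is positive semidefinite, `AᵀA ⪯ c² S²` and
`SA − AS ⪯ 2c S²`, then for every `α > 0` with `α (1+c)² tr(S) ≤ 1` one has
`(I − αHᵀ)(I − αH) ⪯ I − αS`. -/
theorem td_iteration_contraction
    (d : ℕ) (H S A : Matrix (Fin d) (Fin d) ℝ)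
    (hS : S = ((1 : ℝ) / 2) • (H + Hᵀ)) (hA : A = ((1 : ℝ) / 2) • (H - Hᵀ))
    (hSpsd : S.PosSemidef) (c : ℝ) (hc : 0 ≤ c)
    (hA2 : ((c ^ 2) • (S * S) - Aᵀ * A).PosSemidef)
    (hSA : ((2 * c) • (S * S) - (S * A - A * S)).PosSemidef)
    (α : ℝ) (hα : 0 < α) (hαtr : α * (1 + c) ^ 2 * S.trace ≤ 1) :
    ((1 - α • S) - (1 - α • Hᵀ) * (1 - α • H)).PosSemidef := by
  have hH : H = S + A := by rw [hS, hA]; module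
  have hHT : Hᵀ = S - A := by rw [hS, hA]; module
  have hAT : Aᵀ = -A := by
    rw [hA, transpose_smul, transpose_sub, transpose_transpose]
    module
  -- the third piece: S - α(1+c)² S² is psd
  have hβ : 0 ≤ α * (1 + c) ^ 2 := by positivity
  have h3 : (S - (α * (1 + c) ^ 2) • (S * S)).PosSemidef := by
    have t1 : ((α * (1 + c) ^ 2) • (S.trace • S - S * S)).PosSemidef :=
      psd_smul (trace_smul_sub_sq_psd hSpsd) hβ
    have t2 : ((1 - α * (1 + c) ^ 2 * S.trace) • S).PosSemidef := by
      refine psd_smul hSpsd ?_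
      linarith [hαtr]
    have := t2.add t1
    have key : (1 - α * (1 + c) ^ 2 * S.trace) • S
        + (α * (1 + c) ^ 2) • (S.trace • S - S * S)
        = S - (α * (1 + c) ^ 2) • (S * S) := by module
    rwa [key] at this
  have h1 : ((α ^ 2) • ((2 * c) • (S * S) - (S * A - A * S))).PosSemidef :=
    psd_smul hSA (by positivity)
  have h2 : ((α ^ 2) • ((c ^ 2) • (S * S) - Aᵀ * A)).PosSemidef :=
    psd_smul hA2 (by positivity)
  have h3' : (α • (S - (α * (1 + c) ^ 2) • (S * S))).PosSemidef :=
    psd_smul h3 hα.le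
  have key : (1 - α • S) - (1 - α • Hᵀ) * (1 - α • H)
      = (α ^ 2) • ((2 * c) • (S * S) - (S * A - A * S))
        + (α ^ 2) • ((c ^ 2) • (S * S) - Aᵀ * A)
        + α • (S - (α * (1 + c) ^ 2) • (S * S)) := by
    rw [hHT, hH, hAT]
    simp only [mul_sub, sub_mul, mul_one, one_mul, mul_add, add_mul, smul_mul_assoc,
      mul_smul_comm, smul_smul, smul_sub, smul_add, neg_mul, smul_neg]
    module
  rw [key]
  exact (h1.add h2).add h3'
end

section
/- Let H be a real d×d matrix and α > 0 such that (I − α·Hᵀ)·(I − α·H) ⪯ I in the Loewner order. Then for every natural number k: (I − (I − α·H)^k)ᵀ·(I − (I − α·H)^k) ⪯ α²·k²·Hᵀ·H. -/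
open Matrix Finset

section aux

variable {d : ℕ}

private lemma psd_add {A B : Matrix (Fin d) (Fin d) ℝ}
    (hA : A.PosSemidef) (hB : B.PosSemidef) : (A + B).PosSemidef := by
  refine posSemidef_iff_dotProduct_mulVec.mpr ⟨hA.1.add hB.1, fun x => ?_⟩
  rw [add_mulVec, dotProduct_add]
  exact add_nonneg (hA.dotProduct_mulVec_nonneg x) (hB.dotProduct_mulVec_nonneg x)

private lemma psd_smul_s12 {A : Matrix (Fin d) (Fin d) ℝ} {c : ℝ}
    (hA : A.PosSemidef) (hc : 0 ≤ c) : (c • A).PosSemidef := by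
  refine posSemidef_iff_dotProduct_mulVec.mpr ⟨?_, fun x => ?_⟩
  · unfold Matrix.IsHermitian
    rw [conjTranspose_smul, hA.1]
    simp
  · rw [smul_mulVec, dotProduct_smul, smul_eq_mul]
    exact mul_nonneg hc (hA.dotProduct_mulVec_nonneg x)

private lemma psd_sum {ι : Type*} (s : Finset ι) (f : ι → Matrix (Fin d) (Fin d) ℝ)
    (h : ∀ i ∈ s, (f i).PosSemidef) : (∑ i ∈ s, f i).PosSemidef := by
  classical
  induction s using Finset.induction_on with
  | empty => simpa using Matrix.PosSemidef.zero
  | insert _ _ hx ih =>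
    rw [Finset.sum_insert hx]
    exact psd_add (h _ (Finset.mem_insert_self _ _))
      (ih fun i hi => h i (Finset.mem_insert_of_mem hi))

end aux

/-- If `(I − αHᵀ)(I − αH) ⪯ I`, then for every `k`,
`(I − (I − αH)^k)ᵀ (I − (I − αH)^k) ⪯ α² k² Hᵀ H`. -/
theorem transient_part_bound
    (d : ℕ) (H : Matrix (Fin d) (Fin d) ℝ) (α : ℝ) (hα : 0 < α)
    (h : ((1 : Matrix (Fin d) (Fin d) ℝ) - (1 - α • Hᵀ) * (1 - α • H)).PosSemidef) :
    ∀ k : ℕ,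
      ((α ^ 2 * (k : ℝ) ^ 2) • (Hᵀ * H) -
        (1 - (1 - α • H) ^ k)ᵀ * (1 - (1 - α • H) ^ k)).PosSemidef := by
  intro k
  set B : Matrix (Fin d) (Fin d) ℝ := 1 - α • H with hB
  have hBt : Bᵀ = 1 - α • Hᵀ := by
    rw [hB, transpose_sub, transpose_one, transpose_smul]
  have h' : ((1 : Matrix (Fin d) (Fin d) ℝ) - Bᵀ * B).PosSemidef := by
    rwa [hBt]
  -- conjTranspose = transpose over ℝ
  have hct : ∀ M : Matrix (Fin d) (Fin d) ℝ, Mᴴ = Mᵀ := fun M =>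
    conjTranspose_eq_transpose_of_trivial M
  -- Step 1 : `1 - (B^i)ᵀ (B^i)` is PSD
  have hpow : ∀ i : ℕ, ((1 : Matrix (Fin d) (Fin d) ℝ) - (B ^ i)ᵀ * B ^ i).PosSemidef := by
    intro i
    induction i with
    | zero => simpa using (Matrix.PosSemidef.zero (n := Fin d) (R := ℝ))
    | succ n ih =>
      have key : (1 : Matrix (Fin d) (Fin d) ℝ) - (B ^ (n + 1))ᵀ * B ^ (n + 1)
          = (1 - (B ^ n)ᵀ * B ^ n) +
            (B ^ n)ᵀ * ((1 : Matrix (Fin d) (Fin d) ℝ) - Bᵀ * B) * B ^ n := by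
        rw [pow_succ']
        simp only [transpose_mul, Matrix.mul_sub, Matrix.sub_mul, Matrix.mul_one,
          Matrix.one_mul, Matrix.mul_assoc]
        abel
      rw [key]
      have hc := h'.conjTranspose_mul_mul_same (B ^ n)
      rw [hct] at hc
      exact psd_add ih hc
  set S : Matrix (Fin d) (Fin d) ℝ := ∑ i ∈ range k, B ^ i with hS
  set T : Matrix (Fin d) (Fin d) ℝ := ∑ i ∈ range k, (B ^ i)ᵀ * B ^ i with hT
  have hSt : Sᵀ = ∑ i ∈ range k, (B ^ i)ᵀ := by
    rw [hS, transpose_sum]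
  -- Step 2: k•T - SᵀS is PSD (via the double-sum identity)
  have hdouble : ∑ i ∈ range k, ∑ j ∈ range k,
      ((B ^ i - B ^ j)ᵀ * (B ^ i - B ^ j))
      = (k : ℝ) • T + (k : ℝ) • T - (Sᵀ * S + Sᵀ * S) := by
    have expand : ∀ i j : ℕ, (B ^ i - B ^ j)ᵀ * (B ^ i - B ^ j)
        = ((B ^ i)ᵀ * B ^ i + (B ^ j)ᵀ * B ^ j) -
          ((B ^ i)ᵀ * B ^ j + (B ^ j)ᵀ * B ^ i) := by
      intro i j
      simp only [transpose_sub, Matrix.sub_mul, Matrix.mul_sub]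
      abel
    calc ∑ i ∈ range k, ∑ j ∈ range k, ((B ^ i - B ^ j)ᵀ * (B ^ i - B ^ j))
        = ∑ i ∈ range k, ∑ j ∈ range k,
            (((B ^ i)ᵀ * B ^ i + (B ^ j)ᵀ * B ^ j) -
             ((B ^ i)ᵀ * B ^ j + (B ^ j)ᵀ * B ^ i)) := by
          refine Finset.sum_congr rfl fun i _ => Finset.sum_congr rfl fun j _ => expand i j
      _ = (k : ℝ) • T + (k : ℝ) • T - (Sᵀ * S + Sᵀ * S) := by
          simp only [Finset.sum_sub_distrib, Finset.sum_add_distrib, Finset.sum_const,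
            Finset.card_range, ← Finset.mul_sum, ← Finset.sum_mul]
          rw [← hS, ← hSt, ← hT]
          rw [← Finset.smul_sum, ← hT, Nat.cast_smul_eq_nsmul (R := ℝ)]
  have hkT : ((k : ℝ) • T - Sᵀ * S).PosSemidef := by
    have hsum : (∑ i ∈ range k, ∑ j ∈ range k,
        ((B ^ i - B ^ j)ᵀ * (B ^ i - B ^ j))).PosSemidef := by
      refine psd_sum _ _ fun i _ => psd_sum _ _ fun j _ => ?_
      have := Matrix.posSemidef_conjTranspose_mul_self (B ^ i - B ^ j)
      rwa [hct] at this
    have : ((2 : ℝ)⁻¹ • ∑ i ∈ range k, ∑ j ∈ range k,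
        ((B ^ i - B ^ j)ᵀ * (B ^ i - B ^ j))).PosSemidef :=
      psd_smul_s12 hsum (by norm_num)
    have heq : (2 : ℝ)⁻¹ • ∑ i ∈ range k, ∑ j ∈ range k,
        ((B ^ i - B ^ j)ᵀ * (B ^ i - B ^ j)) = (k : ℝ) • T - Sᵀ * S := by
      rw [hdouble]
      rw [smul_sub, smul_add, smul_add]
      module
    rwa [heq] at this
  -- Step 3: k²•1 - SᵀS is PSD
  have hk2 : (((k : ℝ) ^ 2) • (1 : Matrix (Fin d) (Fin d) ℝ) - Sᵀ * S).PosSemidef := by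
    have h1 : (∑ i ∈ range k, ((1 : Matrix (Fin d) (Fin d) ℝ) - (B ^ i)ᵀ * B ^ i))
        = (k : ℝ) • (1 : Matrix (Fin d) (Fin d) ℝ) - T := by
      rw [Finset.sum_sub_distrib, ← hT, Finset.sum_const, Finset.card_range,
        Nat.cast_smul_eq_nsmul (R := ℝ)]
    have hpsd1 : ((k : ℝ) • ((k : ℝ) • (1 : Matrix (Fin d) (Fin d) ℝ) - T)).PosSemidef := by
      refine psd_smul_s12 ?_ (Nat.cast_nonneg k)
      rw [← h1]
      exact psd_sum _ _ fun i _ => hpow i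
    have := psd_add hpsd1 hkT
    have heq : (k : ℝ) • ((k : ℝ) • (1 : Matrix (Fin d) (Fin d) ℝ) - T) +
        ((k : ℝ) • T - Sᵀ * S)
        = ((k : ℝ) ^ 2) • (1 : Matrix (Fin d) (Fin d) ℝ) - Sᵀ * S := by
      rw [smul_sub, smul_smul, ← pow_two]
      abel
    rwa [heq] at this
  -- Step 4: 1 - B^k = α • (S * H)
  have hgeo : (1 : Matrix (Fin d) (Fin d) ℝ) - B ^ k = α • (S * H) := by
    have := geom_sum_mul B k
    have h2 : S * (B - 1) = B ^ k - 1 := this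
    have h3 : S * (1 - B) = 1 - B ^ k := by
      have := congrArg Neg.neg h2
      rw [← Matrix.mul_neg, neg_sub, neg_sub] at this
      exact this
    rw [← h3, hB]
    rw [sub_sub_cancel, Matrix.mul_smul]
  -- Final assembly
  have hfinal : (α ^ 2 * (k : ℝ) ^ 2) • (Hᵀ * H) -
      (1 - B ^ k)ᵀ * (1 - B ^ k)
      = (α ^ 2) • (Hᵀ * (((k : ℝ) ^ 2) • (1 : Matrix (Fin d) (Fin d) ℝ) - Sᵀ * S) * H) := by
    rw [hgeo, transpose_smul, transpose_mul]
    simp only [Matrix.mul_sub, Matrix.sub_mul, Matrix.mul_smul, Matrix.smul_mul,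
      Matrix.mul_one, smul_smul, Matrix.mul_assoc, smul_sub]
    rw [show α * α = α ^ 2 by ring]
  rw [hfinal]
  refine psd_smul_s12 ?_ (by positivity)
  have hc := hk2.conjTranspose_mul_mul_same H
  rwa [hct] at hc
end

section
/- For every c ≥ 0 there exists a constant C > 0 such that for every μ > 0 and every integer k ≥ 1, setting α_i = 2/(μ·(i+1)) for all i: Σ_{i=0}^{k−1} α_i·( c·α_i + μ⁻¹·(i+1)⁻¹ )·exp(−μ·Σ_{j=i+1}^{k−1} α_j) ≤ C/(μ²·k). -/
lemma harmonic_tail_ge (i k : ℕ) (h : i + 1 ≤ k) :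
    Real.log ((k : ℝ) + 1) - Real.log ((i : ℝ) + 2) ≤
      ∑ j ∈ Finset.Ico (i + 1) k, ((j : ℝ) + 1)⁻¹ := by
  induction k, h using Nat.le_induction with
  | base =>
    rw [Finset.Ico_self, Finset.sum_empty]
    push_cast
    have he : (i : ℝ) + 1 + 1 = (i : ℝ) + 2 := by ring
    rw [he]
    linarith
  | succ k hk ih =>
    rw [Finset.sum_Ico_succ_top hk]
    have h1 : Real.log ((k : ℝ) + 1 + 1) - Real.log ((k : ℝ) + 1) ≤ ((k : ℝ) + 1)⁻¹ := by
      have hlog : Real.log (((k : ℝ) + 1 + 1) / ((k : ℝ) + 1)) ≤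
          ((k : ℝ) + 1 + 1) / ((k : ℝ) + 1) - 1 :=
        Real.log_le_sub_one_of_pos (by positivity)
      rw [Real.log_div (by positivity) (by positivity)] at hlog
      have h2 : ((k : ℝ) + 1 + 1) / ((k : ℝ) + 1) - 1 = ((k : ℝ) + 1)⁻¹ := by
        field_simp
        ring
      linarith [h2 ▸ hlog]
    push_cast
    linarith


/-- Arithmetic estimate yielding the `O(1/(μ²k))` rate of regularised stochastic TD(0):
with learning rates `α_i = 2/(μ(i+1))`, second-moment constants at most `c` and squared
biases at most `1/(i+1)`, the stochastic-approximation error sum is `≤ C/(μ²k)`. -/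
theorem rate_stochastic_td
    (c : ℝ) (hc : 0 ≤ c) :
    ∃ C > 0, ∀ μ : ℝ, 0 < μ → ∀ k : ℕ, 1 ≤ k →
      ∑ i ∈ Finset.range k,
          (2 / (μ * ((i : ℝ) + 1))) *
            (c * (2 / (μ * ((i : ℝ) + 1))) + μ⁻¹ * ((i : ℝ) + 1)⁻¹) *
            Real.exp (-μ * ∑ j ∈ Finset.Ico (i + 1) k, 2 / (μ * ((j : ℝ) + 1))) ≤
        C / (μ ^ 2 * k) := by
  refine ⟨8 * (2 * c + 1), by positivity, ?_⟩
  intro μ hμ k hk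
  have hkR : (1 : ℝ) ≤ (k : ℝ) := by exact_mod_cast hk
  have hterm : ∀ i ∈ Finset.range k,
      (2 / (μ * ((i : ℝ) + 1))) *
        (c * (2 / (μ * ((i : ℝ) + 1))) + μ⁻¹ * ((i : ℝ) + 1)⁻¹) *
        Real.exp (-μ * ∑ j ∈ Finset.Ico (i + 1) k, 2 / (μ * ((j : ℝ) + 1))) ≤
      8 * (2 * c + 1) / (μ ^ 2 * ((k : ℝ) + 1) ^ 2) := by
    intro i hi
    rw [Finset.mem_range] at hi
    set S : ℝ := ∑ j ∈ Finset.Ico (i + 1) k, ((j : ℝ) + 1)⁻¹ with hS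
    have hip : (0 : ℝ) < (i : ℝ) + 1 := by positivity
    have hsum : ∑ j ∈ Finset.Ico (i + 1) k, 2 / (μ * ((j : ℝ) + 1)) = (2 / μ) * S := by
      rw [hS, Finset.mul_sum]
      refine Finset.sum_congr rfl fun j _ => ?_
      field_simp
    have hexp : -μ * ∑ j ∈ Finset.Ico (i + 1) k, 2 / (μ * ((j : ℝ) + 1)) = -2 * S := by
      rw [hsum]; field_simp
    rw [hexp]
    have hlog : Real.log ((k : ℝ) + 1) - Real.log ((i : ℝ) + 2) ≤ S :=
      harmonic_tail_ge i k hi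
    have hexpS : Real.exp (-2 * S) ≤ ((i : ℝ) + 2) ^ 2 / ((k : ℝ) + 1) ^ 2 := by
      have h1 : Real.exp (-2 * S) ≤
          Real.exp (-2 * (Real.log ((k : ℝ) + 1) - Real.log ((i : ℝ) + 2))) := by
        apply Real.exp_le_exp.2
        nlinarith
      have h2 : Real.exp (-2 * (Real.log ((k : ℝ) + 1) - Real.log ((i : ℝ) + 2))) =
          ((i : ℝ) + 2) ^ 2 / ((k : ℝ) + 1) ^ 2 := by
        rw [show (-2 : ℝ) * (Real.log ((k : ℝ) + 1) - Real.log ((i : ℝ) + 2)) =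
            2 * Real.log ((i : ℝ) + 2) - 2 * Real.log ((k : ℝ) + 1) by ring,
          Real.exp_sub]
        rw [show (2 : ℝ) * Real.log ((i : ℝ) + 2) = Real.log (((i : ℝ) + 2) ^ 2) by
            rw [Real.log_pow]; push_cast; ring,
          show (2 : ℝ) * Real.log ((k : ℝ) + 1) = Real.log (((k : ℝ) + 1) ^ 2) by
            rw [Real.log_pow]; push_cast; ring]
        rw [Real.exp_log (by positivity), Real.exp_log (by positivity)]
      linarith [h2 ▸ h1]
    have hcoef : (2 / (μ * ((i : ℝ) + 1))) *
        (c * (2 / (μ * ((i : ℝ) + 1))) + μ⁻¹ * ((i : ℝ) + 1)⁻¹) =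
        2 * (2 * c + 1) / (μ ^ 2 * ((i : ℝ) + 1) ^ 2) := by
      field_simp
    rw [hcoef]
    have hcpos : (0 : ℝ) < 2 * (2 * c + 1) / (μ ^ 2 * ((i : ℝ) + 1) ^ 2) := by positivity
    calc 2 * (2 * c + 1) / (μ ^ 2 * ((i : ℝ) + 1) ^ 2) * Real.exp (-2 * S)
        ≤ 2 * (2 * c + 1) / (μ ^ 2 * ((i : ℝ) + 1) ^ 2) *
          (((i : ℝ) + 2) ^ 2 / ((k : ℝ) + 1) ^ 2) :=
          mul_le_mul_of_nonneg_left hexpS (le_of_lt hcpos)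
      _ ≤ 8 * (2 * c + 1) / (μ ^ 2 * ((k : ℝ) + 1) ^ 2) := by
          rw [div_mul_div_comm, div_le_div_iff₀ (by positivity) (by positivity)]
          have hii : ((i : ℝ) + 2) ^ 2 ≤ 4 * ((i : ℝ) + 1) ^ 2 := by nlinarith
          nlinarith [mul_le_mul_of_nonneg_left hii
            (by positivity : (0:ℝ) ≤ 2 * (2 * c + 1) * μ ^ 2 * ((k:ℝ) + 1) ^ 2)]
  calc ∑ i ∈ Finset.range k,
        (2 / (μ * ((i : ℝ) + 1))) *
          (c * (2 / (μ * ((i : ℝ) + 1))) + μ⁻¹ * ((i : ℝ) + 1)⁻¹) *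
          Real.exp (-μ * ∑ j ∈ Finset.Ico (i + 1) k, 2 / (μ * ((j : ℝ) + 1)))
      ≤ ∑ i ∈ Finset.range k, 8 * (2 * c + 1) / (μ ^ 2 * ((k : ℝ) + 1) ^ 2) :=
        Finset.sum_le_sum hterm
    _ = (k : ℝ) * (8 * (2 * c + 1) / (μ ^ 2 * ((k : ℝ) + 1) ^ 2)) := by
        rw [Finset.sum_const, Finset.card_range, nsmul_eq_mul]
    _ ≤ 8 * (2 * c + 1) / (μ ^ 2 * k) := by
        rw [← mul_div_assoc, div_le_div_iff₀ (by positivity) (by positivity)]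
        nlinarith [mul_nonneg (mul_nonneg (by positivity : (0:ℝ) ≤ 8 * (2 * c + 1))
          (sq_nonneg μ)) (by positivity : (0:ℝ) ≤ 2 * (k:ℝ) + 1)]
end

section
/- For every c ≥ 0 there exists a constant C > 0 such that for every μ > 0 and every integer k ≥ 1, setting α_i = 2/(μ·(i+1)) and Δt_i = (i+1)^{−1/3} for all i: Σ_{i=0}^{k−1} α_i·( (c/Δt_i)·α_i + μ⁻¹·Δt_i² )·exp(−μ·Σ_{j=i+1}^{k−1} α_j) ≤ C/(μ²·k^{2/3}). -/
open Finset

private lemma td_exp_bound (μ : ℝ) (hμ : 0 < μ) (i k : ℕ) (hik : i < k) :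
    Real.exp (-μ * ∑ j ∈ Finset.Ico (i + 1) k, 2 / (μ * ((j : ℝ) + 1)))
      ≤ (((i:ℝ)+2)/((k:ℝ)+1))^2 := by
  have hS : Real.log ((k:ℝ)+1) - Real.log ((i:ℝ)+2)
      ≤ ∑ j ∈ Finset.Ico (i+1) k, 1/((j:ℝ)+1) := by
    have htel : ∑ j ∈ Finset.Ico (i+1) k,
        (Real.log (((j+1:ℕ):ℝ)+1) - Real.log ((j:ℝ)+1))
        = Real.log ((k:ℝ)+1) - Real.log (((i+1:ℕ):ℝ)+1) := by
      rw [Finset.sum_Ico_eq_sub _ hik,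
        Finset.sum_range_sub (f := fun n => Real.log ((n:ℝ)+1)),
        Finset.sum_range_sub (f := fun n => Real.log ((n:ℝ)+1))]
      ring
    have h2 : Real.log ((k:ℝ)+1) - Real.log ((i:ℝ)+2)
        = ∑ j ∈ Finset.Ico (i+1) k,
          (Real.log (((j+1:ℕ):ℝ)+1) - Real.log ((j:ℝ)+1)) := by
      rw [htel]; push_cast; ring_nf
    rw [h2]
    apply Finset.sum_le_sum
    intro j _
    have hj1 : (0:ℝ) < (j:ℝ)+1 := by positivity
    push_cast
    rw [← Real.log_div (by positivity) (by positivity)]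
    have := Real.log_le_sub_one_of_pos (x := ((j:ℝ)+1+1)/((j:ℝ)+1)) (by positivity)
    calc Real.log (((j:ℝ)+1+1)/((j:ℝ)+1)) ≤ ((j:ℝ)+1+1)/((j:ℝ)+1) - 1 := this
      _ = 1/((j:ℝ)+1) := by field_simp; ring
  have hsum : -μ * ∑ j ∈ Finset.Ico (i+1) k, 2/(μ*((j:ℝ)+1))
      = -2 * ∑ j ∈ Finset.Ico (i+1) k, 1/((j:ℝ)+1) := by
    rw [Finset.mul_sum, Finset.mul_sum]
    apply Finset.sum_congr rfl
    intro j _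
    have hj1 : (0:ℝ) < (j:ℝ)+1 := by positivity
    field_simp
  rw [hsum]
  have hmono : -2 * ∑ j ∈ Finset.Ico (i+1) k, 1/((j:ℝ)+1)
      ≤ -2 * (Real.log ((k:ℝ)+1) - Real.log ((i:ℝ)+2)) := by nlinarith
  calc Real.exp (-2 * ∑ j ∈ Finset.Ico (i+1) k, 1/((j:ℝ)+1))
      ≤ Real.exp (-2 * (Real.log ((k:ℝ)+1) - Real.log ((i:ℝ)+2))) := Real.exp_le_exp.2 hmono
    _ = (((i:ℝ)+2)/((k:ℝ)+1))^2 := by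
        rw [show -2 * (Real.log ((k:ℝ)+1) - Real.log ((i:ℝ)+2))
            = 2 * (Real.log ((i:ℝ)+2) - Real.log ((k:ℝ)+1)) by ring,
          show (2:ℝ) * (Real.log ((i:ℝ)+2) - Real.log ((k:ℝ)+1))
            = (Real.log ((i:ℝ)+2) - Real.log ((k:ℝ)+1)) * 2 by ring]
        rw [Real.exp_mul, Real.exp_sub, Real.exp_log (by positivity),
          Real.exp_log (by positivity)]
        norm_num

/-- Arithmetic estimate yielding the `O(1/(μ² k^{2/3}))` rate of regularised standard
TD(0): with learning rates `α_i = 2/(μ(i+1))`, time steps `Δt_i = (i+1)^{−1/3}`,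
second-moment constants `c/Δt_i` and biases `Δt_i`, the stochastic-approximation error
sum is `≤ C/(μ² k^{2/3})`. -/
theorem rate_standard_td
    (c : ℝ) (hc : 0 ≤ c) :
    ∃ C > 0, ∀ μ : ℝ, 0 < μ → ∀ k : ℕ, 1 ≤ k →
      ∑ i ∈ Finset.range k,
          (2 / (μ * ((i : ℝ) + 1))) *
            ((c / (((i : ℝ) + 1) ^ (-(1 / 3 : ℝ)))) * (2 / (μ * ((i : ℝ) + 1))) +
              μ⁻¹ * (((i : ℝ) + 1) ^ (-(1 / 3 : ℝ))) ^ 2) *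
            Real.exp (-μ * ∑ j ∈ Finset.Ico (i + 1) k, 2 / (μ * ((j : ℝ) + 1))) ≤
        C / (μ ^ 2 * (k : ℝ) ^ ((2 : ℝ) / 3)) := by
  refine ⟨16 * c + 8, by positivity, ?_⟩
  intro μ hμ k hk
  have hk0 : (0:ℝ) < (k:ℝ) := by exact_mod_cast Nat.lt_of_lt_of_le Nat.zero_lt_one hk
  -- termwise bound
  have hterm : ∀ i ∈ Finset.range k,
      (2 / (μ * ((i : ℝ) + 1))) *
        ((c / (((i : ℝ) + 1) ^ (-(1 / 3 : ℝ)))) * (2 / (μ * ((i : ℝ) + 1))) +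
          μ⁻¹ * (((i : ℝ) + 1) ^ (-(1 / 3 : ℝ))) ^ 2) *
        Real.exp (-μ * ∑ j ∈ Finset.Ico (i + 1) k, 2 / (μ * ((j : ℝ) + 1)))
      ≤ (16 * c + 8) / μ^2 * ((k:ℝ) ^ ((1:ℝ)/3) / (k:ℝ)^2) := by
    intro i hi
    rw [Finset.mem_range] at hi
    set a : ℝ := (i:ℝ) + 1 with ha
    have ha0 : (0:ℝ) < a := by positivity
    set t : ℝ := a ^ ((1:ℝ)/3) with htdef
    have ht0 : (0:ℝ) < t := Real.rpow_pos_of_pos ha0 _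
    have ht3 : t ^ 3 = a := by
      rw [htdef, ← Real.rpow_natCast (a ^ ((1:ℝ)/3)) 3, ← Real.rpow_mul ha0.le]
      norm_num
    have hneg : a ^ (-(1/3 : ℝ)) = t⁻¹ := by
      rw [htdef, ← Real.rpow_neg_one (a ^ ((1:ℝ)/3)), ← Real.rpow_mul ha0.le]
      norm_num
    -- rewrite the coefficient
    have hcoef : (2 / (μ * a)) *
        ((c / (a ^ (-(1/3 : ℝ)))) * (2 / (μ * a)) + μ⁻¹ * (a ^ (-(1/3 : ℝ)))^2)
        = 2 * (2*c + 1) / (μ^2 * t^5) := by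
      rw [hneg, ← ht3]
      field_simp
    rw [hcoef]
    have hE := td_exp_bound μ hμ i k hi
    have hE2 : Real.exp (-μ * ∑ j ∈ Finset.Ico (i + 1) k, 2 / (μ * ((j : ℝ) + 1)))
        ≤ 4 * t^6 / (k:ℝ)^2 := by
      refine hE.trans ?_
      have h1 : ((i:ℝ)+2)/((k:ℝ)+1) ≤ 2*a/(k:ℝ) := by
        rw [div_le_div_iff₀ (by positivity) hk0]
        nlinarith
      have h0 : (0:ℝ) ≤ ((i:ℝ)+2)/((k:ℝ)+1) := by positivity
      calc (((i:ℝ)+2)/((k:ℝ)+1))^2 ≤ (2*a/(k:ℝ))^2 := by nlinarith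
        _ = 4 * t^6 / (k:ℝ)^2 := by rw [← ht3]; field_simp; ring
    have hEpos : (0:ℝ) ≤ Real.exp (-μ * ∑ j ∈ Finset.Ico (i + 1) k, 2 / (μ * ((j : ℝ) + 1))) :=
      (Real.exp_pos _).le
    have hcpos : (0:ℝ) < 2 * (2*c + 1) / (μ^2 * t^5) := by positivity
    calc 2 * (2*c + 1) / (μ^2 * t^5) *
          Real.exp (-μ * ∑ j ∈ Finset.Ico (i + 1) k, 2 / (μ * ((j : ℝ) + 1)))
        ≤ 2 * (2*c + 1) / (μ^2 * t^5) * (4 * t^6 / (k:ℝ)^2) := by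
          exact mul_le_mul_of_nonneg_left hE2 hcpos.le
      _ = (16 * c + 8) / μ^2 * (t / (k:ℝ)^2) := by field_simp; ring
      _ ≤ (16 * c + 8) / μ^2 * ((k:ℝ) ^ ((1:ℝ)/3) / (k:ℝ)^2) := by
          have htk : t ≤ (k:ℝ) ^ ((1:ℝ)/3) := by
            rw [htdef]
            apply Real.rpow_le_rpow ha0.le ?_ (by norm_num)
            have : (i:ℝ) + 1 ≤ (k:ℝ) := by exact_mod_cast hi
            linarith
          gcongr
  -- sum the termwise bounds
  calc ∑ i ∈ Finset.range k,
        (2 / (μ * ((i : ℝ) + 1))) *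
          ((c / (((i : ℝ) + 1) ^ (-(1 / 3 : ℝ)))) * (2 / (μ * ((i : ℝ) + 1))) +
            μ⁻¹ * (((i : ℝ) + 1) ^ (-(1 / 3 : ℝ))) ^ 2) *
          Real.exp (-μ * ∑ j ∈ Finset.Ico (i + 1) k, 2 / (μ * ((j : ℝ) + 1)))
      ≤ ∑ _i ∈ Finset.range k, (16 * c + 8) / μ^2 * ((k:ℝ) ^ ((1:ℝ)/3) / (k:ℝ)^2) :=
        Finset.sum_le_sum hterm
    _ = (k:ℝ) * ((16 * c + 8) / μ^2 * ((k:ℝ) ^ ((1:ℝ)/3) / (k:ℝ)^2)) := by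
        rw [Finset.sum_const, Finset.card_range, nsmul_eq_mul]
    _ = (16 * c + 8) / (μ ^ 2 * (k : ℝ) ^ ((2 : ℝ) / 3)) := by
        have hpow : (k:ℝ)^((1:ℝ)/3) * (k:ℝ)^((2:ℝ)/3) = (k:ℝ) := by
          rw [← Real.rpow_add hk0]; norm_num
        have hne : (k:ℝ)^((2:ℝ)/3) ≠ 0 := by positivity
        have hne2 : (k:ℝ) ≠ 0 := ne_of_gt hk0
        have hμ' : μ ≠ 0 := ne_of_gt hμ
        field_simp
        linear_combination hpow
end
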